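/- Let C be a chain complex over an additive category containing a segment A → B⊕C → D⊕E → F, where the map A → B⊕C has components (0, f), the middle map is the matrix [[Φ, α],[β, γ]] with Φ : B → D an isomorphism, and the map D⊕E → F has components (0, g). Then C is chain homotopy equivalent to the complex obtained by replacing this segment with A → C → E → F, where the middle map is γ − β∘Φ⁻¹∘α. -/
import Mathlib


open CategoryTheory CategoryTheory.Limits

/-- A (cochain) complex segment `X0 → X1 → X2 → X3` over an additive category:
four consecutive terms of a chain complex with composable differentials squaring to zero.
(All other terms of the ambient complex are unchanged by Gaussian elimination, so the
statement is about this four-term segment.) -/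
structure FourComplex (C : Type*) [Category C] [Preadditive C] where
  X0 : C
  X1 : C
  X2 : C
  X3 : C
  d0 : X0 ⟶ X1
  d1 : X1 ⟶ X2
  d2 : X2 ⟶ X3
  w01 : d0 ≫ d1 = 0
  w12 : d1 ≫ d2 = 0

namespace FourComplex

variable {C : Type*} [Category C] [Preadditive C]

/-- A chain map between four-term complexes. -/
structure Map (X Y : FourComplex C) where
  f0 : X.X0 ⟶ Y.X0
  f1 : X.X1 ⟶ Y.X1
  f2 : X.X2 ⟶ Y.X2
  f3 : X.X3 ⟶ Y.X3
  comm0 : f0 ≫ Y.d0 = X.d0 ≫ f1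
  comm1 : f1 ≫ Y.d1 = X.d1 ≫ f2
  comm2 : f2 ≫ Y.d2 = X.d2 ≫ f3

/-- The identity chain map. -/
def Map.id (X : FourComplex C) : Map X X :=
  ⟨𝟙 _, 𝟙 _, 𝟙 _, 𝟙 _, by simp, by simp, by simp⟩

/-- Composition of chain maps. -/
def Map.comp {X Y Z : FourComplex C} (φ : Map X Y) (ψ : Map Y Z) : Map X Z :=
  ⟨φ.f0 ≫ ψ.f0, φ.f1 ≫ ψ.f1, φ.f2 ≫ ψ.f2, φ.f3 ≫ ψ.f3,
    by rw [Category.assoc, ψ.comm0, ← Category.assoc, φ.comm0, Category.assoc],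
    by rw [Category.assoc, ψ.comm1, ← Category.assoc, φ.comm1, Category.assoc],
    by rw [Category.assoc, ψ.comm2, ← Category.assoc, φ.comm2, Category.assoc]⟩

/-- A chain homotopy between two chain maps of four-term complexes, given by
maps `h_i : X_i → Y_{i-1}` with `φ − ψ = d∘h + h∘d` in each degree. -/
structure Htpy {X Y : FourComplex C} (φ ψ : Map X Y) where
  h1 : X.X1 ⟶ Y.X0
  h2 : X.X2 ⟶ Y.X1
  h3 : X.X3 ⟶ Y.X2
  comm0 : φ.f0 - ψ.f0 = X.d0 ≫ h1
  comm1 : φ.f1 - ψ.f1 = X.d1 ≫ h2 + h1 ≫ Y.d0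
  comm2 : φ.f2 - ψ.f2 = X.d2 ≫ h3 + h2 ≫ Y.d1
  comm3 : φ.f3 - ψ.f3 = h3 ≫ Y.d2

/-- A chain homotopy equivalence between four-term complexes. -/
structure Equiv (X Y : FourComplex C) where
  hom : Map X Y
  inv : Map Y X
  homInvId : Htpy (hom.comp inv) (Map.id X)
  invHomId : Htpy (inv.comp hom) (Map.id Y)

end FourComplex

/-!
STATEMENT 0 (Gaussian elimination): Suppose a chain complex contains the segment
`A → B⊕C → D⊕E → F` where the first map has components `(0, f)`, the middle map is the
matrix `[[Φ, α], [β, γ]]` with `Φ : B → D` an isomorphism, and the last map has components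
`(0, g)`.  Then this complex is chain homotopy equivalent to the one obtained by replacing
the segment with `A → C → E → F`, with middle map `γ − β ∘ Φ⁻¹ ∘ α`.

The hypotheses `hfα, hfγ, hβg, hγg` are exactly the statement that the displayed segment
is a complex (they are the components of `d² = 0` for the two compositions). -/
theorem gaussian_elimination
    {C : Type*} [Category C] [Preadditive C] [HasBinaryBiproducts C]
    (A B Cc D E Ff : C)
    (f : A ⟶ Cc) (Φ : B ⟶ D) [IsIso Φ] (α : Cc ⟶ D) (β : B ⟶ E) (γ : Cc ⟶ E) (g : E ⟶ Ff)
    (hfα : f ≫ α = 0) (hfγ : f ≫ γ = 0) (hβg : β ≫ g = 0) (hγg : γ ≫ g = 0) :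
    Nonempty (FourComplex.Equiv
      ({ X0 := A, X1 := B ⊞ Cc, X2 := D ⊞ E, X3 := Ff
         d0 := biprod.lift 0 f
         d1 := biprod.desc (biprod.lift Φ β) (biprod.lift α γ)
         d2 := biprod.desc 0 g
         w01 := by
           ext
           · simp [hfα]
           · simp [hfγ]
         w12 := by
           ext
           · simp [hβg]
           · simp [hγg] } : FourComplex C)
      ({ X0 := A, X1 := Cc, X2 := E, X3 := Ff
         d0 := f
         d1 := γ - α ≫ inv Φ ≫ β
         d2 := g
         w01 := by simp [Preadditive.comp_sub, hfγ, reassoc_of% hfα]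
         w12 := by simp [Preadditive.sub_comp, hγg, hβg] } : FourComplex C)) := by
  refine ⟨{
    hom := { f0 := 𝟙 A, f1 := biprod.snd,
             f2 := biprod.desc (-(inv Φ ≫ β)) (𝟙 E), f3 := 𝟙 Ff,
             comm0 := by simp,
             comm1 := by
               ext
               · simp
               · simp [Preadditive.comp_sub]
                 abel
             comm2 := by
               ext
               · simp [reassoc_of% hβg, hβg]
               · simp }
    inv := { f0 := 𝟙 A, f1 := biprod.lift (-(α ≫ inv Φ)) (𝟙 Cc),
             f2 := biprod.lift 0 (𝟙 E), f3 := 𝟙 Ff,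
             comm0 := by
               ext
               · simp [reassoc_of% hfα]
               · simp
             comm1 := by
               ext
               · simp [Preadditive.sub_comp]
               · simp [Preadditive.sub_comp]
                 abel
             comm2 := by simp }
    homInvId := {
      h1 := 0
      h2 := biprod.desc (-(inv Φ ≫ biprod.inl)) 0
      h3 := 0
      comm0 := by simp [FourComplex.Map.comp, FourComplex.Map.id]
      comm1 := by
        simp only [FourComplex.Map.comp, FourComplex.Map.id]
        ext <;>
          simp [Preadditive.sub_comp, Preadditive.comp_sub, Preadditive.add_comp,
            Preadditive.comp_add]
      comm2 := by
        simp only [FourComplex.Map.comp, FourComplex.Map.id]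
        ext <;>
          simp [Preadditive.sub_comp, Preadditive.comp_sub, Preadditive.add_comp,
            Preadditive.comp_add]
      comm3 := by simp [FourComplex.Map.comp, FourComplex.Map.id] }
    invHomId := {
      h1 := 0
      h2 := 0
      h3 := 0
      comm0 := by simp [FourComplex.Map.comp, FourComplex.Map.id]
      comm1 := by simp [FourComplex.Map.comp, FourComplex.Map.id]
      comm2 := by simp [FourComplex.Map.comp, FourComplex.Map.id]
      comm3 := by simp [FourComplex.Map.comp, FourComplex.Map.id] } }⟩
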